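/- Let v_1,...,v_m ∈ ℝ^n and let a_1 ≤ b_1, ..., a_m ≤ b_m be real numbers. A vector w ∈ ℝ^n can be written as w = Σ_{i=1}^m x_i v_i for some real numbers x_i with a_i ≤ x_i ≤ b_i for each i, if and only if w ∈ Σ_{i=1}^m ℝ v_i and for every {v_1,...,v_m}-indecomposable point [u] ∈ ℝP_+^{n-1} one has (u,w) ≤ Σ_{i=1}^m a_i·((u,v_i) − |(u,v_i)|)/2 + Σ_{i=1}^m b_i·((u,v_i) + |(u,v_i)|)/2. -/

import Mathlib

noncomputable section

/-- The standard inner product on `ℝ^n`. -/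
def dotR {n : ℕ} (u v : Fin n → ℝ) : ℝ := ∑ i, u i * v i

/-- `[u] = [u']` : positive equivalence of nonzero vectors (`u' = r • u` with `r > 0`). -/
def PosEq {n : ℕ} (u u' : Fin n → ℝ) : Prop := ∃ r : ℝ, 0 < r ∧ u' = r • u

/-- `u` is `{v₁,…,vₘ}`-decomposable. -/
def Decomp {n m : ℕ} (v : Fin m → Fin n → ℝ) (u : Fin n → ℝ) : Prop :=
  ∃ u' u'' : Fin n → ℝ, u' ≠ 0 ∧ u'' ≠ 0 ∧
    u' ∈ Submodule.span ℝ (Set.range v) ∧ u'' ∈ Submodule.span ℝ (Set.range v) ∧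
    u = u' + u'' ∧ ¬ PosEq u u' ∧ ¬ PosEq u u'' ∧
    ∀ i, 0 ≤ dotR u' (v i) * dotR u'' (v i)

/-- `u` is `{v₁,…,vₘ}`-indecomposable. -/
def Indecomp {n m : ℕ} (v : Fin m → Fin n → ℝ) (u : Fin n → ℝ) : Prop :=
  u ≠ 0 ∧ u ∈ Submodule.span ℝ (Set.range v) ∧ ¬ Decomp v u

namespace FarkasAux

open scoped RealInnerProductSpace

variable {n m : ℕ}

lemma dotR_add_left (u u' x : Fin n → ℝ) : dotR (u + u') x = dotR u x + dotR u' x := by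
  simp [dotR, add_mul, Finset.sum_add_distrib]
lemma dotR_smul_left (c : ℝ) (u x : Fin n → ℝ) : dotR (c • u) x = c * dotR u x := by
  simp [dotR, Finset.mul_sum, mul_assoc]
lemma dotR_zero_left (x : Fin n → ℝ) : dotR 0 x = 0 := by simp [dotR]
lemma dotR_zero_right (u : Fin n → ℝ) : dotR u 0 = 0 := by simp [dotR]
lemma dotR_add_right (u x y : Fin n → ℝ) : dotR u (x + y) = dotR u x + dotR u y := by
  simp [dotR, mul_add, Finset.sum_add_distrib]
lemma dotR_sub_right (u x y : Fin n → ℝ) : dotR u (x - y) = dotR u x - dotR u y := by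
  simp [dotR, mul_sub, Finset.sum_sub_distrib]
lemma dotR_smul_right (c : ℝ) (u x : Fin n → ℝ) : dotR u (c • x) = c * dotR u x := by
  simp [dotR, Finset.mul_sum, mul_left_comm]
lemma dotR_sum_right (u : Fin n → ℝ) (f : Fin m → Fin n → ℝ) :
    dotR u (∑ i, f i) = ∑ i, dotR u (f i) := by
  simp only [dotR, Finset.sum_apply, Finset.mul_sum]
  rw [Finset.sum_comm]
lemma dotR_continuous (x : Fin n → ℝ) : Continuous fun u : Fin n → ℝ => dotR u x :=
  continuous_finset_sum _ fun i _ => (continuous_apply i).mul continuous_const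
lemma eq_zero_of_dot_eq_zero {v : Fin m → Fin n → ℝ} {u : Fin n → ℝ}
    (hu : u ∈ Submodule.span ℝ (Set.range v)) (hd : ∀ i, dotR u (v i) = 0) : u = 0 := by
  have key : ∀ x, x ∈ Submodule.span ℝ (Set.range v) → dotR u x = 0 := by
    intro x hx
    induction hx using Submodule.span_induction with
    | mem x hx => obtain ⟨i, rfl⟩ := hx; exact hd i
    | zero => exact dotR_zero_right u
    | add x y _ _ hx hy => rw [dotR_add_right, hx, hy, add_zero]
    | smul c x _ hx => rw [dotR_smul_right, hx, mul_zero]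
  have h2 : dotR u u = 0 := key u hu
  rw [dotR] at h2
  funext i
  exact mul_self_eq_zero.mp
    ((Finset.sum_eq_zero_iff_of_nonneg (fun j _ => mul_self_nonneg (u j))).mp h2 i
      (Finset.mem_univ i))
lemma sign_split {A B : ℝ} (h1 : 0 ≤ A * B) (h2 : 0 ≤ A + B) : 0 ≤ A ∧ 0 ≤ B := by
  rcases le_total 0 A with hA | hA <;> rcases le_total 0 B with hB | hB
  · exact ⟨hA, hB⟩
  · have h3 : A * B = 0 := le_antisymm (mul_nonpos_of_nonneg_of_nonpos hA hB) h1
    rcases mul_eq_zero.mp h3 with h | h <;> constructor <;> linarith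
  · have h3 : A * B = 0 := le_antisymm (mul_nonpos_of_nonpos_of_nonneg hA hB) h1
    rcases mul_eq_zero.mp h3 with h | h <;> constructor <;> linarith
  · constructor <;> linarith
lemma abs_eq_of_sign {s d : ℝ} (hs : s = 1 ∨ s = -1) (h : 0 ≤ s * d) : |d| = s * d := by
  rcases hs with rfl | rfl
  · rw [one_mul] at *; exact abs_of_nonneg h
  · rw [neg_one_mul] at *; exact abs_of_nonpos (by linarith)
def Fb (v : Fin m → Fin n → ℝ) (a b : Fin m → ℝ) (u : Fin n → ℝ) : ℝ :=
  ∑ i, a i * ((dotR u (v i) - |dotR u (v i)|) / 2) +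
    ∑ i, b i * ((dotR u (v i) + |dotR u (v i)|) / 2)

lemma key (v : Fin m → Fin n → ℝ) (a b : Fin m → ℝ) (w : Fin n → ℝ)
    (hind : ∀ u : Fin n → ℝ, Indecomp v u → dotR u w ≤ Fb v a b u)
    (u₀ : Fin n → ℝ) (h₀ : u₀ ∈ Submodule.span ℝ (Set.range v)) :
    dotR u₀ w ≤ Fb v a b u₀ := by
  by_cases hz : u₀ = 0
  · subst hz; simp [Fb, dotR_zero_left]
  set Vp := Submodule.span ℝ (Set.range v) with hVp
  set s : Fin m → ℝ := fun i => if 0 ≤ dotR u₀ (v i) then 1 else -1 with hs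
  have hs1 : ∀ i, s i = 1 ∨ s i = -1 := fun i => by
    by_cases h : 0 ≤ dotR u₀ (v i) <;> simp [hs, h]
  have hss : ∀ i, s i * s i = 1 := fun i => by rcases hs1 i with h | h <;> rw [h] <;> norm_num
  set q : Fin n → ℝ := (∑ i, (if 0 ≤ dotR u₀ (v i) then b i else a i) • v i) - w with hq
  set C : Set (Fin n → ℝ) := {u | u ∈ Vp ∧ ∀ i, 0 ≤ s i * dotR u (v i)} with hC
  have hgq : ∀ u ∈ C, Fb v a b u - dotR u w = dotR u q := by
    intro u hu
    have habs : ∀ i, |dotR u (v i)| = s i * dotR u (v i) := fun i =>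
      abs_eq_of_sign (hs1 i) (hu.2 i)
    have h1 : dotR u q = (∑ i, (if 0 ≤ dotR u₀ (v i) then b i else a i) * dotR u (v i))
        - dotR u w := by
      rw [hq, dotR_sub_right, dotR_sum_right]
      congr 1
      exact Finset.sum_congr rfl fun i _ => dotR_smul_right _ _ _
    rw [h1]
    congr 1
    unfold Fb
    rw [← Finset.sum_add_distrib]
    apply Finset.sum_congr rfl
    intro i _
    rw [habs i]
    by_cases h : 0 ≤ dotR u₀ (v i) <;> simp only [hs, if_pos, if_neg, h, if_true, if_false] <;> ring
  set ℓ : (Fin n → ℝ) → ℝ := fun u => ∑ i, s i * dotR u (v i) with hℓ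
  have hℓ0 : ∀ u ∈ C, 0 ≤ ℓ u := fun u hu => Finset.sum_nonneg fun i _ => hu.2 i
  have hpointed : ∀ u ∈ C, ℓ u = 0 → u = 0 := by
    intro u hu hlu
    apply eq_zero_of_dot_eq_zero hu.1
    intro i
    have h4 := (Finset.sum_eq_zero_iff_of_nonneg (fun j _ => hu.2 j)).mp hlu i (Finset.mem_univ i)
    rcases hs1 i with h | h <;> rw [h] at h4 <;> linarith
  have hℓadd : ∀ u u', ℓ (u + u') = ℓ u + ℓ u' := by
    intro u u'; simp [hℓ, dotR_add_left, mul_add, Finset.sum_add_distrib]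
  have hℓsmul : ∀ (c : ℝ) u, ℓ (c • u) = c * ℓ u := by
    intro c u
    simp only [hℓ, dotR_smul_left, Finset.mul_sum]
    exact Finset.sum_congr rfl fun i _ => by ring
  have h₀C : u₀ ∈ C := by
    refine ⟨h₀, fun i => ?_⟩
    by_cases h : 0 ≤ dotR u₀ (v i) <;> simp [hs, h]
    · linarith [lt_of_not_ge h]
  have hℓ₀pos : 0 < ℓ u₀ :=
    lt_of_le_of_ne (hℓ0 u₀ h₀C) fun h => hz (hpointed u₀ h₀C h.symm)
  -- cone closed under nonneg scaling
  have hCsmul : ∀ (c : ℝ), 0 ≤ c → ∀ u ∈ C, c • u ∈ C := by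
    intro c hc u hu
    refine ⟨Vp.smul_mem c hu.1, fun i => ?_⟩
    rw [dotR_smul_left]
    have := hu.2 i; nlinarith
  -- norm lower bound on the span: boundedness of the base
  have hVclosed : IsClosed ((Vp : Set (Fin n → ℝ))) := Vp.closed_of_finiteDimensional
  set N : (Fin n → ℝ) → ℝ := fun u => ∑ i, |dotR u (v i)| with hN
  have hNcont : Continuous N := continuous_finset_sum _ fun i _ => (dotR_continuous (v i)).abs
  have hNzero : ∀ u ∈ Vp, N u = 0 → u = 0 := by
    intro u hu hNu
    apply eq_zero_of_dot_eq_zero hu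
    intro i
    have h4 := (Finset.sum_eq_zero_iff_of_nonneg
      (fun j (_ : j ∈ Finset.univ) => abs_nonneg (dotR u (v j)))).mp hNu i (Finset.mem_univ i)
    exact abs_eq_zero.mp h4
  set Sp : Set (Fin n → ℝ) := (Vp : Set _) ∩ Metric.sphere 0 1 with hSp
  have hSpcomp : IsCompact Sp := by
    apply Metric.isCompact_of_isClosed_isBounded
    · exact hVclosed.inter Metric.isClosed_sphere
    · exact Metric.isBounded_sphere.subset Set.inter_subset_right
  have hSpne : Sp.Nonempty := by
    refine ⟨‖u₀‖⁻¹ • u₀, Submodule.smul_mem _ _ h₀, ?_⟩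
    rw [mem_sphere_zero_iff_norm, norm_smul, norm_inv, norm_norm]
    exact inv_mul_cancel₀ (norm_ne_zero_iff.mpr hz)
  obtain ⟨msp, hmsp, hminN⟩ := hSpcomp.exists_isMinOn hSpne hNcont.continuousOn
  set δ : ℝ := N msp with hδ
  have hδpos : 0 < δ := by
    rcases lt_or_eq_of_le (Finset.sum_nonneg fun i (_ : i ∈ Finset.univ) =>
      abs_nonneg (dotR msp (v i)) : 0 ≤ N msp) with h | h
    · exact h
    · exfalso
      have h5 : msp = 0 := hNzero msp hmsp.1 h.symm
      have h6 := mem_sphere_zero_iff_norm.mp hmsp.2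
      rw [h5, norm_zero] at h6; norm_num at h6
  have hbound : ∀ u ∈ Vp, ‖u‖ * δ ≤ N u := by
    intro u hu
    by_cases h : u = 0
    · subst h; simp [hN, dotR_zero_left]
    have hn : 0 < ‖u‖ := norm_pos_iff.mpr h
    have h1 : (‖u‖⁻¹ • u) ∈ Sp := by
      refine ⟨Submodule.smul_mem _ _ hu, ?_⟩
      rw [mem_sphere_zero_iff_norm, norm_smul, norm_inv, norm_norm]
      exact inv_mul_cancel₀ (ne_of_gt hn)
    have h2 : δ ≤ N (‖u‖⁻¹ • u) := isMinOn_iff.mp hminN _ h1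
    have h3 : N (‖u‖⁻¹ • u) = ‖u‖⁻¹ * N u := by
      simp only [hN, dotR_smul_left, abs_mul, abs_of_nonneg (inv_nonneg.mpr hn.le),
        Finset.mul_sum]
    rw [h3] at h2
    calc ‖u‖ * δ ≤ ‖u‖ * (‖u‖⁻¹ * N u) := by nlinarith
      _ = N u := by field_simp
  -- the compact convex base B
  set B : Set (Fin n → ℝ) := {u | u ∈ C ∧ ℓ u = 1} with hB
  have hℓcont : Continuous ℓ :=
    continuous_finset_sum _ fun i _ => continuous_const.mul (dotR_continuous (v i))
  have hNeqℓ : ∀ u ∈ C, N u = ℓ u := by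
    intro u hu
    exact Finset.sum_congr rfl fun i _ => abs_eq_of_sign (hs1 i) (hu.2 i)
  have hBclosed : IsClosed B := by
    have h1 : B = ((Vp : Set (Fin n → ℝ)) ∩ ⋂ i, {u | 0 ≤ s i * dotR u (v i)}) ∩ {u | ℓ u = 1} := by
      ext u
      simp only [hB, hC, Set.mem_setOf_eq, Set.mem_inter_iff, Set.mem_iInter, SetLike.mem_coe]
      try tauto
    rw [h1]
    refine IsClosed.inter (hVclosed.inter (isClosed_iInter fun i => ?_)) ?_
    · exact isClosed_le continuous_const (continuous_const.mul (dotR_continuous (v i)))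
    · exact isClosed_eq hℓcont continuous_const
  have hBbdd : Bornology.IsBounded B := by
    rw [isBounded_iff_forall_norm_le]
    refine ⟨δ⁻¹, fun u hu => ?_⟩
    have h1 : ‖u‖ * δ ≤ N u := hbound u hu.1.1
    rw [hNeqℓ u hu.1, hu.2] at h1
    rw [← one_div]
    rw [le_div_iff₀ hδpos]
    exact h1
  have hBcomp : IsCompact B := Metric.isCompact_of_isClosed_isBounded hBclosed hBbdd
  have hmemB : ∀ u ∈ C, u ≠ 0 → (ℓ u)⁻¹ • u ∈ B := by
    intro u hu hune
    have hlu : 0 < ℓ u := lt_of_le_of_ne (hℓ0 u hu) fun h => hune (hpointed u hu h.symm)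
    exact ⟨hCsmul _ (inv_nonneg.mpr hlu.le) u hu, by
      rw [hℓsmul]; exact inv_mul_cancel₀ (ne_of_gt hlu)⟩
  have hBne : B.Nonempty := ⟨(ℓ u₀)⁻¹ • u₀, hmemB u₀ h₀C hz⟩
  -- minimize the linear functional dotR · q over B
  obtain ⟨e₀, he₀B, he₀min⟩ := hBcomp.exists_isMinOn hBne (dotR_continuous q).continuousOn
  set c : ℝ := dotR e₀ q with hc
  rcases le_or_gt 0 c with hcpos | hcneg
  · -- directly conclude
    have h4 : c ≤ dotR ((ℓ u₀)⁻¹ • u₀) q := isMinOn_iff.mp he₀min _ (hmemB u₀ h₀C hz)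
    rw [dotR_smul_left] at h4
    have h5 : 0 ≤ dotR u₀ q := by nlinarith [inv_pos.mpr hℓ₀pos]
    have h6 := hgq u₀ h₀C
    linarith
  · -- extreme point of the argmin face is indecomposable: contradiction
    exfalso
    set M : Set (Fin n → ℝ) := B ∩ {x | dotR x q = c} with hM
    have hMcomp : IsCompact M := hBcomp.inter_right (isClosed_eq (dotR_continuous q) continuous_const)
    have hMne : M.Nonempty := ⟨e₀, he₀B, rfl⟩
    obtain ⟨e, he⟩ := hMcomp.extremePoints_nonempty hMne
    rw [mem_extremePoints] at he
    obtain ⟨⟨heB, heq⟩, hext⟩ := he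
    have heq : dotR e q = c := heq
    have hene : e ≠ 0 := by
      intro h
      have h1 := heB.2
      rw [h] at h1
      simp only [hℓ, dotR_zero_left, mul_zero, Finset.sum_const_zero] at h1
      norm_num at h1
    have hind_e : Indecomp v e := by
      refine ⟨hene, heB.1.1, ?_⟩
      rintro ⟨u', u'', hne', hne'', hsp', hsp'', heqd, hpe', hpe'', hsign⟩
      have hC' : ∀ i, 0 ≤ s i * dotR u' (v i) ∧ 0 ≤ s i * dotR u'' (v i) := by
        intro i
        have h1 : 0 ≤ (s i * dotR u' (v i)) * (s i * dotR u'' (v i)) := by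
          have h2 := hsign i; have h3 := hss i; nlinarith
        have h2 : 0 ≤ s i * dotR u' (v i) + s i * dotR u'' (v i) := by
          have h3 := heB.1.2 i
          rw [heqd, dotR_add_left, mul_add] at h3
          exact h3
        exact sign_split h1 h2
      have hu'C : u' ∈ C := ⟨hsp', fun i => (hC' i).1⟩
      have hu''C : u'' ∈ C := ⟨hsp'', fun i => (hC' i).2⟩
      have hl' : 0 < ℓ u' := lt_of_le_of_ne (hℓ0 _ hu'C) fun h => hne' (hpointed _ hu'C h.symm)
      have hl'' : 0 < ℓ u'' := lt_of_le_of_ne (hℓ0 _ hu''C) fun h => hne'' (hpointed _ hu''C h.symm)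
      have hsum : ℓ u' + ℓ u'' = 1 := by rw [← hℓadd, ← heqd]; exact heB.2
      set y : Fin n → ℝ := (ℓ u')⁻¹ • u' with hy
      set z' : Fin n → ℝ := (ℓ u'')⁻¹ • u'' with hz'
      have hyB : y ∈ B := hmemB u' hu'C hne'
      have hzB : z' ∈ B := hmemB u'' hu''C hne''
      have hyq : c ≤ dotR y q := isMinOn_iff.mp he₀min _ hyB
      have hzq : c ≤ dotR z' q := isMinOn_iff.mp he₀min _ hzB
      have hcomb : (ℓ u') * dotR y q + (ℓ u'') * dotR z' q = c := by
        rw [hy, hz', dotR_smul_left, dotR_smul_left, ← heq, heqd, dotR_add_left]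
        field_simp
      have hyc : dotR y q = c := by nlinarith
      have hzc : dotR z' q = c := by nlinarith
      have hopen : e ∈ openSegment ℝ y z' := by
        refine ⟨ℓ u', ℓ u'', hl', hl'', hsum, ?_⟩
        rw [hy, hz', smul_smul, smul_smul, mul_inv_cancel₀ (ne_of_gt hl'),
          mul_inv_cancel₀ (ne_of_gt hl''), one_smul, one_smul, heqd]
      have h7 := hext y ⟨hyB, hyc⟩ z' ⟨hzB, hzc⟩ hopen
      apply hpe'
      refine ⟨ℓ u', hl', ?_⟩
      rw [← h7.1, hy, smul_smul, mul_inv_cancel₀ (ne_of_gt hl'), one_smul]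
    have h8 := hind e hind_e
    have h9 := hgq e heB.1
    rw [heq] at h9
    linarith


lemma term_bound {a b x d : ℝ} (h1 : a ≤ x) (h2 : x ≤ b) :
    x * d ≤ a * ((d - |d|) / 2) + b * ((d + |d|) / 2) := by
  rcases le_total 0 d with h | h
  · rw [abs_of_nonneg h]; nlinarith
  · rw [abs_of_nonpos h]; nlinarith

def toE {n : ℕ} (u : Fin n → ℝ) : EuclideanSpace ℝ (Fin n) := WithLp.toLp 2 u

lemma toE_mem {v : Fin m → Fin n → ℝ} {x : Fin n → ℝ}
    (hx : x ∈ Submodule.span ℝ (Set.range v)) :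
    toE x ∈ Submodule.span ℝ (Set.range fun i => toE (v i)) := by
  induction hx using Submodule.span_induction with
  | mem x hx => obtain ⟨i, rfl⟩ := hx; exact Submodule.subset_span ⟨i, rfl⟩
  | zero => exact Submodule.zero_mem _
  | add x y _ _ hx hy => exact Submodule.add_mem _ hx hy
  | smul c x _ hx => exact Submodule.smul_mem _ c hx

lemma ofE_mem {v : Fin m → Fin n → ℝ} {y : EuclideanSpace ℝ (Fin n)}
    (hy : y ∈ Submodule.span ℝ (Set.range fun i => toE (v i))) :
    y.ofLp ∈ Submodule.span ℝ (Set.range v) := by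
  induction hy using Submodule.span_induction with
  | mem y hy => obtain ⟨i, rfl⟩ := hy; exact Submodule.subset_span ⟨i, rfl⟩
  | zero => exact Submodule.zero_mem _
  | add x y _ _ hx hy => exact Submodule.add_mem _ hx hy
  | smul c x _ hx => exact Submodule.smul_mem _ c hx

lemma dotR_eq_inner (u v : EuclideanSpace ℝ (Fin n)) : dotR u v = ⟪u, v⟫ := by
  simp [dotR, PiLp.inner_apply, RCLike.inner_apply]
  exact Finset.sum_congr rfl fun i _ => mul_comm _ _

lemma Fb_congr {v : Fin m → Fin n → ℝ} {a b : Fin m → ℝ} {u u' : Fin n → ℝ}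
    (h : ∀ i, dotR u (v i) = dotR u' (v i)) : Fb v a b u = Fb v a b u' := by
  unfold Fb; simp only [h]

end FarkasAux

open FarkasAux in
/-- **Theorem 2.4**: Farkas' lemma over ℝ with the inequality only required at
the indecomposable points. (The condition on a point `[u]` is scale invariant, so it is
expressed by quantifying over all indecomposable representatives `u`.) -/
theorem farkas_real_indecomposable {n m : ℕ} (v : Fin m → Fin n → ℝ) (a b : Fin m → ℝ)
    (hab : ∀ i, a i ≤ b i) (w : Fin n → ℝ) :
    (∃ x : Fin m → ℝ, (∀ i, a i ≤ x i ∧ x i ≤ b i) ∧ w = ∑ i, x i • v i) ↔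
      (w ∈ Submodule.span ℝ (Set.range v) ∧
        ∀ u : Fin n → ℝ, Indecomp v u →
          dotR u w ≤ ∑ i, a i * ((dotR u (v i) - |dotR u (v i)|) / 2) +
            ∑ i, b i * ((dotR u (v i) + |dotR u (v i)|) / 2)) := by
  open scoped RealInnerProductSpace in
  constructor
  · rintro ⟨x, hx, rfl⟩
    refine ⟨Submodule.sum_mem _ fun i _ =>
      Submodule.smul_mem _ _ (Submodule.subset_span ⟨i, rfl⟩), ?_⟩
    intro u _
    have h1 : dotR u (∑ i, x i • v i) = ∑ i, x i * dotR u (v i) := by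
      rw [dotR_sum_right]
      exact Finset.sum_congr rfl fun i _ => dotR_smul_right _ _ _
    rw [h1, ← Finset.sum_add_distrib]
    exact Finset.sum_le_sum fun i _ => term_bound (hx i).1 (hx i).2
  · rintro ⟨hw, hind⟩
    by_contra hx
    -- the compact convex set K of representable vectors
    set L : (Fin m → ℝ) →ₗ[ℝ] (Fin n → ℝ) :=
      { toFun := fun x => ∑ i, x i • v i
        map_add' := fun x y => by
          simp [add_smul, Finset.sum_add_distrib]
        map_smul' := fun c x => by
          simp [Finset.smul_sum, smul_smul] } with hL
    set K : Set (Fin n → ℝ) := L '' Set.Icc a b with hK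
    have hKcomp : IsCompact K := (isCompact_Icc).image L.continuous_of_finiteDimensional
    have hKconv : Convex ℝ K := (convex_Icc a b).linear_image L
    have hwK : w ∉ K := by
      rintro ⟨x, hxIcc, hxw⟩
      exact hx ⟨x, fun i => ⟨hxIcc.1 i, hxIcc.2 i⟩, hxw.symm⟩
    obtain ⟨f, c₀, hfK, hfw⟩ := geometric_hahn_banach_closed_point hKconv hKcomp.isClosed hwK
    set z : Fin n → ℝ := fun i => f (Pi.single i 1) with hz
    have hfz : ∀ y : Fin n → ℝ, f y = dotR z y := by
      intro y
      have hy : ∑ i, y i • (Pi.single i 1 : Fin n → ℝ) = y := by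
        ext j
        simp [Pi.single_apply]
      calc f y = f (∑ i, y i • (Pi.single i 1 : Fin n → ℝ)) := by rw [hy]
        _ = ∑ i, y i * f (Pi.single i 1) := by
            rw [map_sum]
            exact Finset.sum_congr rfl fun i _ => by rw [map_smul]; rfl
        _ = dotR z y := by
            rw [dotR]
            exact Finset.sum_congr rfl fun i _ => by simp only [hz]; ring
    have hzw : c₀ < dotR z w := by rw [← hfz]; exact hfw
    set x₀ : Fin m → ℝ := fun i => if 0 ≤ dotR z (v i) then b i else a i with hx₀
    have hx₀Icc : x₀ ∈ Set.Icc a b := by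
      constructor <;> intro i <;> by_cases h : 0 ≤ dotR z (v i) <;>
        simp [hx₀, h, hab i]
    have hLx₀ : f (L x₀) = Fb v a b z := by
      rw [hfz]
      have h2 : dotR z (L x₀) = ∑ i, x₀ i * dotR z (v i) := by
        show dotR z (∑ i, x₀ i • v i) = _
        rw [dotR_sum_right]
        exact Finset.sum_congr rfl fun i _ => dotR_smul_right _ _ _
      rw [h2]
      unfold Fb
      rw [← Finset.sum_add_distrib]
      apply Finset.sum_congr rfl
      intro i _
      by_cases h : 0 ≤ dotR z (v i)
      · rw [abs_of_nonneg h]; simp only [hx₀, if_pos h]; ring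
      · rw [abs_of_nonpos (le_of_not_ge h)]; simp only [hx₀, if_neg h]; ring
    have hgz : Fb v a b z - dotR z w < 0 := by
      have h3 := hfK (L x₀) ⟨x₀, hx₀Icc, rfl⟩
      rw [hLx₀] at h3
      linarith
    -- orthogonal projection onto the span
    set V' : Submodule ℝ (EuclideanSpace ℝ (Fin n)) :=
      Submodule.span ℝ (Set.range fun i => toE (v i)) with hV'
    haveI : CompleteSpace V' := FiniteDimensional.complete ℝ V'
    set z₀ : EuclideanSpace ℝ (Fin n) := ((Submodule.orthogonalProjectionOnto V' (toE z) : V') : EuclideanSpace ℝ (Fin n)) with hz₀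
    have hz₀V : z₀ ∈ V' := SetLike.coe_mem _
    have hdots : ∀ x : Fin n → ℝ, toE x ∈ V' → dotR z₀ x = dotR z x := by
      intro x hxV
      have h1 : toE z - z₀ ∈ V'ᗮ := Submodule.sub_starProjection_mem_orthogonal (K := V') (toE z)
      have h2 : ⟪toE x, toE z - z₀⟫ = 0 := Submodule.inner_right_of_mem_orthogonal hxV h1
      have h3 : ⟪toE x, toE z⟫ - ⟪toE x, z₀⟫ = 0 := by rw [← inner_sub_right]; exact h2
      have e1 : dotR z₀ x = ⟪z₀, toE x⟫ := dotR_eq_inner z₀ (toE x)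
      have e2 : dotR z x = ⟪toE z, toE x⟫ := dotR_eq_inner (toE z) (toE x)
      rw [e1, e2]
      have c1 := real_inner_comm z₀ (toE x)
      have c2 := real_inner_comm (toE z) (toE x)
      linarith
    have hz₀w : dotR z₀ w = dotR z w := hdots w (toE_mem hw)
    have hz₀v : ∀ i, dotR z₀ (v i) = dotR z (v i) := fun i =>
      hdots (v i) (Submodule.subset_span ⟨i, rfl⟩)
    have hFbeq : Fb v a b z₀ = Fb v a b z := Fb_congr hz₀v
    have hgz₀ : Fb v a b z₀ - dotR z₀ w < 0 := by rw [hFbeq, hz₀w]; exact hgz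
    have hz₀Vp : z₀.ofLp ∈ Submodule.span ℝ (Set.range v) := ofE_mem hz₀V
    have hfinal := key v a b w hind z₀ hz₀Vp
    linarith
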